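/- For any finite family of vectors a₁,...,aₙ in ℝ² each of norm at most ε, there exists a choice of signs ε_i ∈ {1,-1} (with ε₁ = 1) such that ‖∑ ε_i a_i‖ ≤ 6ε. -/

import Mathlib

open scoped RealInnerProductSpace


lemma three_pair (x1 y1 x2 y2 x3 y3 : ℝ) :
    (x1^2+y1^2)*(x2^2+y2^2) ≤ 4*(x1*x2+y1*y2)^2 ∨
    (x1^2+y1^2)*(x3^2+y3^2) ≤ 4*(x1*x3+y1*y3)^2 ∨
    (x2^2+y2^2)*(x3^2+y3^2) ≤ 4*(x2*x3+y2*y3)^2 := by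
  by_contra h
  push_neg at h
  obtain ⟨h12, h13, h23⟩ := h
  set n1 := x1^2+y1^2 with hn1def
  set n2 := x2^2+y2^2 with hn2def
  set n3 := x3^2+y3^2 with hn3def
  have hn1 : 0 < n1 := by
    rcases lt_or_eq_of_le (by positivity : (0:ℝ) ≤ n1) with h | h
    · exact h
    · exfalso; nlinarith [sq_nonneg (x1*x2+y1*y2)]
  have hn2 : 0 < n2 := by
    rcases lt_or_eq_of_le (by positivity : (0:ℝ) ≤ n2) with h | h
    · exact h
    · exfalso; nlinarith [sq_nonneg (x1*x2+y1*y2)]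
  have hn3 : 0 < n3 := by
    rcases lt_or_eq_of_le (by positivity : (0:ℝ) ≤ n3) with h | h
    · exact h
    · exfalso; nlinarith [sq_nonneg (x1*x3+y1*y3)]
  set A1 := x1^2-y1^2 with hA1def
  set B1 := 2*x1*y1 with hB1def
  set A2 := x2^2-y2^2 with hA2def
  set B2 := 2*x2*y2 with hB2def
  set A3 := x3^2-y3^2 with hA3def
  set B3 := 2*x3*y3 with hB3def
  have hA1 : A1^2 + B1^2 = n1^2 := by rw [hA1def, hB1def, hn1def]; ring
  have hA2 : A2^2 + B2^2 = n2^2 := by rw [hA2def, hB2def, hn2def]; ring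
  have hA3 : A3^2 + B3^2 = n3^2 := by rw [hA3def, hB3def, hn3def]; ring
  have h12' : 2*(A1*A2 + B1*B2) < - (n1*n2) := by
    have : A1*A2 + B1*B2 = 2*(x1*x2+y1*y2)^2 - n1*n2 := by
      rw [hA1def, hB1def, hA2def, hB2def, hn1def, hn2def]; ring
    linarith [h12, this.ge, this.le]
  have h13' : 2*(A1*A3 + B1*B3) < - (n1*n3) := by
    have : A1*A3 + B1*B3 = 2*(x1*x3+y1*y3)^2 - n1*n3 := by
      rw [hA1def, hB1def, hA3def, hB3def, hn1def, hn3def]; ring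
    linarith [h13]
  have h23' : 2*(A2*A3 + B2*B3) < - (n2*n3) := by
    have : A2*A3 + B2*B3 = 2*(x2*x3+y2*y3)^2 - n2*n3 := by
      rw [hA2def, hB2def, hA3def, hB3def, hn2def, hn3def]; ring
    linarith [h23]
  have t12 := mul_lt_mul_of_pos_right h12' (by positivity : (0:ℝ) < n1*n2*n3^2)
  have t13 := mul_lt_mul_of_pos_right h13' (by positivity : (0:ℝ) < n1*n3*n2^2)
  have t23 := mul_lt_mul_of_pos_right h23' (by positivity : (0:ℝ) < n2*n3*n1^2)
  have e1 := sq_nonneg (n2*n3*A1 + n1*n3*A2 + n1*n2*A3)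
  have e2 := sq_nonneg (n2*n3*B1 + n1*n3*B2 + n1*n2*B3)
  have key : (n2*n3*A1 + n1*n3*A2 + n1*n2*A3)^2 + (n2*n3*B1 + n1*n3*B2 + n1*n2*B3)^2
      = 3*(n1*n2*n3)^2 + 2*(A1*A2+B1*B2)*(n1*n2*n3^2)
        + 2*(A1*A3+B1*B3)*(n1*n3*n2^2) + 2*(A2*A3+B2*B3)*(n2*n3*n1^2) := by
    linear_combination (n2*n3)^2 * hA1 + (n1*n3)^2 * hA2 + (n1*n2)^2 * hA3
  linarith [e1, e2, t12, t13, t23, key.le, key.ge]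


lemma inner_coords (p q : EuclideanSpace ℝ (Fin 2)) :
    ⟪p, q⟫ = p 0 * q 0 + p 1 * q 1 := by
  simp [PiLp.inner_apply, Fin.sum_univ_two, mul_comm]

lemma norm_sq_coords (p : EuclideanSpace ℝ (Fin 2)) :
    ‖p‖^2 = p 0^2 + p 1^2 := by
  rw [← real_inner_self_eq_norm_sq, inner_coords]; ring

-- expand norm of signed sum
lemma norm_signed_sq {σ : ℝ} (hσ : σ = 1 ∨ σ = -1) (x y : EuclideanSpace ℝ (Fin 2)) :
    ‖x + σ • y‖^2 = ‖x‖^2 + 2*σ*⟪x, y⟫ + ‖y‖^2 := by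
  rw [@norm_add_sq_real, real_inner_smul_right, norm_smul]
  have : ‖σ‖ = 1 := by rcases hσ with h | h <;> simp [h]
  rw [this]; ring

lemma pair_small {ε : ℝ} (hε : 0 < ε) (x y : EuclideanSpace ℝ (Fin 2))
    (hx : ‖x‖ ≤ ε) (hy : ‖y‖ ≤ ε) (h : ‖x‖^2 * ‖y‖^2 ≤ 4*⟪x, y⟫^2) :
    ∃ σ : ℝ, (σ = 1 ∨ σ = -1) ∧ ‖x + σ • y‖ ≤ ε := by
  have habs : ‖x‖ * ‖y‖ ≤ 2*|⟪x, y⟫| := by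
    nlinarith [abs_nonneg ⟪x, y⟫, mul_nonneg (norm_nonneg x) (norm_nonneg y),
      sq_abs ⟪x, y⟫]
  refine ⟨if 0 ≤ ⟪x, y⟫ then -1 else 1, by split <;> simp, ?_⟩
  have hσ : (if 0 ≤ ⟪x, y⟫ then (-1:ℝ) else 1) = 1 ∨ (if 0 ≤ ⟪x, y⟫ then (-1:ℝ) else 1) = -1 := by
    split <;> simp
  have hcross : (if 0 ≤ ⟪x, y⟫ then (-1:ℝ) else 1) * ⟪x, y⟫ = -|⟪x, y⟫| := by
    split_ifs with h'
    · rw [abs_of_nonneg h']; ring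
    · rw [abs_of_neg (lt_of_not_ge h')]; ring
  have hsq := norm_signed_sq hσ x y
  have : ‖x + (if 0 ≤ ⟪x, y⟫ then (-1:ℝ) else 1) • y‖^2 ≤ ε^2 := by
    rw [hsq]
    nlinarith [norm_nonneg x, norm_nonneg y, hcross]
  nlinarith [norm_nonneg (x + (if 0 ≤ ⟪x, y⟫ then (-1:ℝ) else 1) • y)]

lemma pair_bound {ε : ℝ} (hε : 0 < ε) (x y : EuclideanSpace ℝ (Fin 2))
    (hx : ‖x‖ ≤ ε) (hy : ‖y‖ ≤ ε) :
    ∃ σ : ℝ, (σ = 1 ∨ σ = -1) ∧ ‖x + σ • y‖ ≤ 2*ε := by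
  refine ⟨if 0 ≤ ⟪x, y⟫ then -1 else 1, by split <;> simp, ?_⟩
  have hσ : (if 0 ≤ ⟪x, y⟫ then (-1:ℝ) else 1) = 1 ∨ (if 0 ≤ ⟪x, y⟫ then (-1:ℝ) else 1) = -1 := by
    split <;> simp
  have hcross : (if 0 ≤ ⟪x, y⟫ then (-1:ℝ) else 1) * ⟪x, y⟫ ≤ 0 := by
    split_ifs with h'
    · linarith [h']
    · linarith [(lt_of_not_ge h').le]
  have hsq := norm_signed_sq hσ x y
  have : ‖x + (if 0 ≤ ⟪x, y⟫ then (-1:ℝ) else 1) • y‖^2 ≤ (2*ε)^2 := by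
    rw [hsq]; nlinarith [norm_nonneg x, norm_nonneg y]
  nlinarith [norm_nonneg (x + (if 0 ≤ ⟪x, y⟫ then (-1:ℝ) else 1) • y)]

lemma exists_good_pair {ε : ℝ} (hε : 0 < ε) (u v w : EuclideanSpace ℝ (Fin 2))
    (hu : ‖u‖ ≤ ε) (hv : ‖v‖ ≤ ε) (hw : ‖w‖ ≤ ε) :
    (∃ σ : ℝ, (σ = 1 ∨ σ = -1) ∧ ‖u + σ • v‖ ≤ ε) ∨
    (∃ σ : ℝ, (σ = 1 ∨ σ = -1) ∧ ‖u + σ • w‖ ≤ ε) ∨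
    (∃ σ : ℝ, (σ = 1 ∨ σ = -1) ∧ ‖v + σ • w‖ ≤ ε) := by
  rcases three_pair (u 0) (u 1) (v 0) (v 1) (w 0) (w 1) with h | h | h
  · left
    exact pair_small hε u v hu hv
      (by rw [norm_sq_coords, norm_sq_coords, inner_coords]; exact h)
  · right; left
    exact pair_small hε u w hu hw
      (by rw [norm_sq_coords, norm_sq_coords, inner_coords]; exact h)
  · right; right
    exact pair_small hε v w hv hw
      (by rw [norm_sq_coords, norm_sq_coords, inner_coords]; exact h)

lemma mul_sign {a b : ℝ} (ha : a = 1 ∨ a = -1) (hb : b = 1 ∨ b = -1) :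
    a * b = 1 ∨ a * b = -1 := by
  rcases ha with h | h <;> rcases hb with h' | h' <;> simp [h, h']

lemma list_signs {ε : ℝ} (hε : 0 < ε) :
    ∀ n (l : List (EuclideanSpace ℝ (Fin 2))), l.length = n →
      (∀ x ∈ l, ‖x‖ ≤ ε) →
      ∃ s : List ℝ, s.length = l.length ∧ (∀ σ ∈ s, σ = 1 ∨ σ = -1) ∧
        ‖(List.zipWith (· • ·) s l).sum‖ ≤ 2*ε := by
  intro n
  induction n using Nat.strong_induction_on with
  | _ n ih =>
  intro l hl hbound
  match l with
  | [] =>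
    exact ⟨[], rfl, by simp, by simp; positivity⟩
  | [u] =>
    refine ⟨[1], rfl, by simp, ?_⟩
    simp only [List.zipWith, List.sum_cons, List.sum_nil, one_smul, add_zero]
    have := hbound u (by simp)
    linarith
  | [u, v] =>
    obtain ⟨σ, hσ, hn⟩ := pair_bound hε u v (hbound u (by simp)) (hbound v (by simp))
    refine ⟨[1, σ], rfl, ?_, ?_⟩
    · intro τ hτ
      rcases List.mem_pair.mp hτ with rfl | rfl
      · exact Or.inl rfl
      · exact hσ
    · simpa using hn
  | u :: v :: w :: rest =>
    have hlen : rest.length + 3 = n := by simpa using hl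
    have hu := hbound u (by simp)
    have hv := hbound v (by simp)
    have hw := hbound w (by simp)
    have hrest : ∀ x ∈ rest, ‖x‖ ≤ ε := fun x hx => hbound x (by simp [hx])
    rcases exists_good_pair hε u v w hu hv hw with ⟨σ, hσ, hc⟩ | ⟨σ, hσ, hc⟩ | ⟨σ, hσ, hc⟩
    · -- combine u, v
      obtain ⟨s, hslen, hssign, hsum⟩ := ih (rest.length + 2) (by omega)
        ((u + σ • v) :: w :: rest) (by simp)
        (by intro x hx
            rcases List.mem_cons.1 hx with h | h
            · subst h; exact hc
            · rcases List.mem_cons.1 h with h' | h'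
              · subst h'; exact hw
              · exact hrest x h')
      obtain ⟨t0, s', rfl⟩ : ∃ t0 s', s = t0 :: s' := by
        cases s with
        | nil => simp at hslen
        | cons a t => exact ⟨a, t, rfl⟩
      refine ⟨t0 :: (t0 * σ) :: s', by simpa using hslen, ?_, ?_⟩
      · intro τ hτ
        simp only [List.mem_cons] at hτ
        rcases hτ with rfl | rfl | hτ
        · exact hssign τ (by simp)
        · exact mul_sign (hssign t0 (by simp)) hσ
        · exact hssign τ (by simp [hτ])
      · have : (List.zipWith (· • ·) (t0 :: (t0 * σ) :: s') (u :: v :: w :: rest)).sum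
            = (List.zipWith (· • ·) (t0 :: s') ((u + σ • v) :: w :: rest)).sum := by
          simp only [List.zipWith_cons_cons, List.sum_cons]
          rw [smul_add, smul_smul]
          abel
        rw [this]; exact hsum
    · -- combine u, w
      obtain ⟨s, hslen, hssign, hsum⟩ := ih (rest.length + 2) (by omega)
        ((u + σ • w) :: v :: rest) (by simp)
        (by intro x hx
            rcases List.mem_cons.1 hx with h | h
            · subst h; exact hc
            · rcases List.mem_cons.1 h with h' | h'
              · subst h'; exact hv
              · exact hrest x h')
      obtain ⟨t0, t1, s', rfl⟩ : ∃ t0 t1 s', s = t0 :: t1 :: s' := by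
        cases s with
        | nil => simp at hslen
        | cons a t =>
          cases t with
          | nil => simp at hslen
          | cons b t' => exact ⟨a, b, t', rfl⟩
      refine ⟨t0 :: t1 :: (t0 * σ) :: s', by simpa using hslen, ?_, ?_⟩
      · intro τ hτ
        simp only [List.mem_cons] at hτ
        rcases hτ with rfl | rfl | rfl | hτ
        · exact hssign τ (by simp)
        · exact hssign τ (by simp)
        · exact mul_sign (hssign t0 (by simp)) hσ
        · exact hssign τ (by simp [hτ])
      · have : (List.zipWith (· • ·) (t0 :: t1 :: (t0 * σ) :: s') (u :: v :: w :: rest)).sum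
            = (List.zipWith (· • ·) (t0 :: t1 :: s') ((u + σ • w) :: v :: rest)).sum := by
          simp only [List.zipWith_cons_cons, List.sum_cons]
          rw [smul_add, smul_smul]
          abel
        rw [this]; exact hsum
    · -- combine v, w
      obtain ⟨s, hslen, hssign, hsum⟩ := ih (rest.length + 2) (by omega)
        (u :: (v + σ • w) :: rest) (by simp)
        (by intro x hx
            rcases List.mem_cons.1 hx with h | h
            · subst h; exact hu
            · rcases List.mem_cons.1 h with h' | h'
              · subst h'; exact hc
              · exact hrest x h')
      obtain ⟨t0, t1, s', rfl⟩ : ∃ t0 t1 s', s = t0 :: t1 :: s' := by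
        cases s with
        | nil => simp at hslen
        | cons a t =>
          cases t with
          | nil => simp at hslen
          | cons b t' => exact ⟨a, b, t', rfl⟩
      refine ⟨t0 :: t1 :: (t1 * σ) :: s', by simpa using hslen, ?_, ?_⟩
      · intro τ hτ
        simp only [List.mem_cons] at hτ
        rcases hτ with rfl | rfl | rfl | hτ
        · exact hssign τ (by simp)
        · exact hssign τ (by simp)
        · exact mul_sign (hssign t1 (by simp)) hσ
        · exact hssign τ (by simp [hτ])
      · have : (List.zipWith (· • ·) (t0 :: t1 :: (t1 * σ) :: s') (u :: v :: w :: rest)).sum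
            = (List.zipWith (· • ·) (t0 :: t1 :: s') (u :: (v + σ • w) :: rest)).sum := by
          simp only [List.zipWith_cons_cons, List.sum_cons]
          rw [smul_add, smul_smul]
          abel
        rw [this]; exact hsum

theorem stmt3 (n : ℕ) (a : Fin n → EuclideanSpace ℝ (Fin 2)) (ε : ℝ)
    (hε : 0 < ε) (ha : ∀ i, ‖a i‖ ≤ ε) :
    ∃ s : Fin n → ℝ, (∀ i, s i = 1 ∨ s i = -1) ∧
      (∀ h : 0 < n, s ⟨0, h⟩ = 1) ∧
      ‖∑ i, s i • a i‖ ≤ 6 * ε := by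
  rcases Nat.eq_zero_or_pos n with rfl | hn
  · refine ⟨fun _ => 1, fun i => Or.inl rfl, fun h => rfl, ?_⟩
    simp only [Finset.univ_eq_empty, Finset.sum_empty, norm_zero]
    positivity
  · obtain ⟨t, htlen, htsign, htsum⟩ := list_signs hε n (List.ofFn a)
      List.length_ofFn (by
        intro x hx
        obtain ⟨i, rfl⟩ := List.mem_ofFn.1 hx
        exact ha i)
    rw [List.length_ofFn] at htlen
    set s₀ : Fin n → ℝ := fun i => t[(i : ℕ)]'(by rw [htlen]; exact i.2) with hs₀
    have hzip : List.zipWith (· • ·) t (List.ofFn a) = List.ofFn (fun i => s₀ i • a i) := by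
      apply List.ext_getElem
      · simp [htlen]
      · intro i h1 h2
        simp only [List.getElem_zipWith, List.getElem_ofFn]
        rfl
    rw [hzip, List.sum_ofFn] at htsum
    have hsign₀ : ∀ i, s₀ i = 1 ∨ s₀ i = -1 := by
      intro i
      exact htsign _ (List.getElem_mem _)
    set c : ℝ := s₀ ⟨0, hn⟩ with hc
    have hcsign : c = 1 ∨ c = -1 := hsign₀ _
    refine ⟨fun i => c * s₀ i, fun i => mul_sign hcsign (hsign₀ i), ?_, ?_⟩
    · intro h
      have he : s₀ ⟨0, h⟩ = c := rfl
      show c * s₀ ⟨0, h⟩ = 1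
      rw [he]
      rcases hcsign with h' | h' <;> rw [h'] <;> norm_num
    · have : ∑ i, (c * s₀ i) • a i = c • ∑ i, s₀ i • a i := by
        rw [Finset.smul_sum]
        exact Finset.sum_congr rfl fun i _ => by rw [smul_smul]
      rw [this, norm_smul]
      have hcn : ‖c‖ = 1 := by rcases hcsign with h' | h' <;> simp [h']
      rw [hcn, one_mul]
      linarith
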